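/- For every fixed x in a metric space X and every family (T_α)_{α∈I} of maps T_α : X → C(𝕋), the set ℰ_x := {E ∈ 𝒦(𝕋) : {T_α(x)|_E : α ∈ I} is dense in C(E)} is a G_δ subset of 𝒦(𝕋). -/

import Mathlib

open MeasureTheory Complex Filter Topology Set TopologicalSpace

noncomputable section

instance : Fact (0 < 2 * Real.pi) := ⟨by positivity⟩

/-- The unit circle ℝ/2πℤ. -/
abbrev UnitCircle := AddCircle (2 * Real.pi)

/-- The n-th partial sum of the Fourier series of `f`. -/
noncomputable def partialSum (n : ℕ) (f : UnitCircle → ℂ) : C(UnitCircle, ℂ) :=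
  ∑ k ∈ Finset.Icc (-(n : ℤ)) (n : ℤ), fourierCoeff f k • fourier k

lemma isOpen_subset_of_isOpen {V : Set UnitCircle} (hV : IsOpen V) :
    IsOpen {E : NonemptyCompacts UnitCircle | (E : Set UnitCircle) ⊆ V} := by
  rw [Metric.isOpen_iff]
  intro E hE
  obtain ⟨δ, hδ, hsub⟩ := E.isCompact.exists_thickening_subset_open hV hE
  refine ⟨δ, hδ, fun E' hE' => ?_⟩
  intro y hy
  apply hsub
  rw [Metric.mem_thickening_iff]
  have hfin : EMetric.hausdorffEdist (E' : Set UnitCircle) (E : Set UnitCircle) ≠ ⊤ :=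
    Metric.hausdorffEdist_ne_top_of_nonempty_of_bounded E'.nonempty E.nonempty
      E'.isCompact.isBounded E.isCompact.isBounded
  have hd : Metric.hausdorffDist (E' : Set UnitCircle) (E : Set UnitCircle) < δ := by
    rw [← Metric.NonemptyCompacts.dist_eq]
    exact hE'
  obtain ⟨z, hz, hdz⟩ := Metric.exists_dist_lt_of_hausdorffDist_lt hy hd hfin
  exact ⟨z, hz, hdz⟩

/-- For a fixed `x` and a family `T_α : X → C(𝕋)`, the set of compact `E` on which
`{T_α x |_E : α ∈ I}` is dense in `C(E)` is a `G_δ` subset of `𝒦(𝕋)`. -/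
theorem stmt9 {X : Type*} [MetricSpace X] {I : Type*} (T : I → X → C(UnitCircle, ℂ)) (x : X) :
    IsGδ {E : NonemptyCompacts UnitCircle |
      Dense (Set.range fun α : I => (T α x).restrict (E : Set UnitCircle))} := by
  obtain ⟨D, hDc, hDd⟩ := TopologicalSpace.exists_countable_dense C(UnitCircle, ℂ)
  have key : {E : NonemptyCompacts UnitCircle |
      Dense (Set.range fun α : I => (T α x).restrict (E : Set UnitCircle))} =
      ⋂ d ∈ D, ⋂ n : ℕ, ⋃ α : I,
        {E : NonemptyCompacts UnitCircle |
          (E : Set UnitCircle) ⊆ {t | dist ((T α x) t) (d t) < 1 / (n + 1)}} := by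
    ext E
    simp only [mem_setOf_eq, mem_iInter, mem_iUnion]
    haveI : CompactSpace (E : Set UnitCircle) := isCompact_iff_compactSpace.mp E.isCompact
    constructor
    · intro hdense d _hd n
      have hpos : (0 : ℝ) < 1 / (n + 1) := by positivity
      obtain ⟨g, hgb, hgr⟩ :=
        Metric.dense_iff.1 hdense (d.restrict (E : Set UnitCircle)) _ hpos
      obtain ⟨α, rfl⟩ := hgr
      refine ⟨α, fun t ht => ?_⟩
      rw [Metric.mem_ball] at hgb
      have hα : dist ((T α x).restrict (E : Set UnitCircle))
          (d.restrict (E : Set UnitCircle)) < 1 / (n + 1) := by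
        exact hgb
      have := (ContinuousMap.dist_lt_iff hpos).1 hα ⟨t, ht⟩
      exact this
    · intro h
      rw [Metric.dense_iff]
      intro f r hr
      -- extend f to the whole circle
      obtain ⟨F, hF⟩ := f.exists_restrict_eq E.isCompact.isClosed
      obtain ⟨d, hdb, hd⟩ := Metric.dense_iff.1 hDd F (r / 3) (by linarith)
      rw [Metric.mem_ball] at hdb
      obtain ⟨n, hn⟩ := exists_nat_one_div_lt (show (0:ℝ) < r / 3 by linarith)
      obtain ⟨α, hα⟩ := h d hd n
      refine ⟨(T α x).restrict (E : Set UnitCircle), ?_, ⟨α, rfl⟩⟩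
      rw [Metric.mem_ball]
      have h1 : dist ((T α x).restrict (E : Set UnitCircle))
          (d.restrict (E : Set UnitCircle)) < r / 3 := by
        refine (ContinuousMap.dist_lt_iff (by linarith)).2 fun t => ?_
        show dist ((T α x) t.1) (d t.1) < r / 3
        exact lt_trans (hα t.2) hn
      have h2 : dist (d.restrict (E : Set UnitCircle)) f ≤ r / 3 := by
        rw [← hF]
        refine (ContinuousMap.dist_le (by linarith)).2 fun t => ?_
        show dist (d t.1) (F t.1) ≤ r / 3
        exact le_trans (ContinuousMap.dist_apply_le_dist t.1) (le_of_lt hdb)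
      exact lt_of_le_of_lt
        (dist_triangle ((T α x).restrict (E : Set UnitCircle))
          (d.restrict (E : Set UnitCircle)) f) (by linarith)
  rw [key]
  refine IsGδ.biInter hDc fun d _ => IsGδ.iInter fun n => IsOpen.isGδ ?_
  refine isOpen_iUnion fun α => isOpen_subset_of_isOpen ?_
  have : Continuous fun t => dist ((T α x) t) (d t) :=
    (map_continuous (T α x)).dist (map_continuous d)
  exact isOpen_lt this continuous_const
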